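/- Let β > 1 be a Pisot number of degree s with companion matrix M (of its minimal polynomial, viewed as a real s × s matrix). Then there exist a vector v ∈ ℝ^s with M v = β v and a constant C > 0 such that for every N ≥ 0 and every choice of integers a₀, …, a_N with 0 ≤ a_j ≤ ⌊β⌋ for all j, one has ‖ Σ_{j=0}^N a_j Mʲ e₁ − (Σ_{j=0}^N a_j βʲ) v ‖ ≤ C, where e₁ is the first standard basis vector of ℝ^s. (This expresses that the address map of the set of β-integers is almost linear, so that X_β is a Meyer set when β is Pisot.) -/

import Mathlib

open Polynomial


noncomputable section

/-- The `s × s` companion matrix (over `ℝ`) of a monic polynomial `p` of degree `s` with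
rational coefficients: `1`'s on the subdiagonal, last column `(-c₀, …, -c_{s-1})ᵗ`. -/
def companionMatrix (s : ℕ) (p : Polynomial ℚ) : Matrix (Fin s) (Fin s) ℝ :=
  fun i j =>
    if (i : ℕ) = (j : ℕ) + 1 then 1
    else if (j : ℕ) = s - 1 then -((p.coeff (i : ℕ) : ℝ))
    else 0

/-- Companion-type matrix of a polynomial over any field. -/
def cmat {K : Type*} [Field K] (s : ℕ) (P : Polynomial K) : Matrix (Fin s) (Fin s) K :=
  fun i j =>
    if (i : ℕ) = (j : ℕ) + 1 then 1
    else if (j : ℕ) = s - 1 then -(P.coeff (i : ℕ))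
    else 0

lemma cmat_mulVec {K : Type*} [Field K] {s : ℕ} (hs : 0 < s) (P : Polynomial K)
    (w : Fin s → K) (i : Fin s) :
    (cmat s P).mulVec w i =
      (if h : 1 ≤ (i : ℕ) then w ⟨(i : ℕ) - 1, by omega⟩ else 0)
        - P.coeff (i : ℕ) * w ⟨s - 1, by omega⟩ := by
  have hlt := i.isLt
  have : ∀ j : Fin s, cmat s P i j * w j =
      (if j = (⟨(i:ℕ) - 1, by omega⟩ : Fin s) then (if 1 ≤ (i:ℕ) then w j else 0) else 0)
      + (if j = (⟨s - 1, by omega⟩ : Fin s) then -(P.coeff (i:ℕ)) * w j else 0) := by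
    intro j
    have hjlt := j.isLt
    simp only [cmat, Fin.ext_iff]
    split_ifs <;> (try ring) <;> omega
  simp only [Matrix.mulVec, dotProduct, this, Finset.sum_add_distrib,
    Finset.sum_ite_eq', Finset.mem_univ, if_true]
  split_ifs <;> ring

lemma cmat_eig {K : Type*} [Field K] {s : ℕ} (hs : 0 < s) (P : Polynomial K)
    (hM : P.Monic) (hd : P.natDegree = s) (γ : K) (hγ : P.eval γ = 0) :
    (cmat s P).mulVec (fun i : Fin s => (P /ₘ (X - C γ)).coeff (i : ℕ))
      = γ • fun i : Fin s => (P /ₘ (X - C γ)).coeff (i : ℕ) := by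
  set q := P /ₘ (X - C γ) with hq
  have hfac : (X - C γ) * q = P := (mul_divByMonic_eq_iff_isRoot).2 hγ
  have hdq : q.natDegree = s - 1 := by
    rw [hq, natDegree_divByMonic P (monic_X_sub_C γ), hd, natDegree_X_sub_C]
  have hc0 : P.coeff 0 = -γ * q.coeff 0 := by
    rw [← hfac]; simp [coeff_mul_C, mul_comm]
  have hcn : ∀ n : ℕ, P.coeff (n + 1) = q.coeff n - γ * q.coeff (n + 1) := by
    intro n
    rw [← hfac, sub_mul, coeff_sub, coeff_X_mul, coeff_C_mul]
  have htop : q.coeff (s - 1) = 1 := by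
    have h1 := hM.coeff_natDegree
    rw [hd] at h1
    rcases Nat.exists_eq_add_of_lt hs with ⟨k, hk⟩
    have hk' : s = k + 1 := by omega
    have h2 := hcn k
    rw [← hk', h1] at h2
    have h3 : q.coeff (k + 1) = 0 := by
      apply coeff_eq_zero_of_natDegree_lt; omega
    rw [hk', h3] at h2
    rw [hk']
    simp only [Nat.add_sub_cancel]
    rw [mul_zero, sub_zero] at h2
    exact h2.symm
  funext i
  rw [cmat_mulVec hs]
  simp only [Pi.smul_apply, smul_eq_mul, htop, mul_one]
  rcases Nat.eq_zero_or_pos (i : ℕ) with h0 | h1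
  · rw [dif_neg (by omega), h0, hc0]; ring
  · rw [dif_pos (by omega : 1 ≤ (i:ℕ))]
    rcases Nat.exists_eq_add_of_lt h1 with ⟨n, hn⟩
    have hn' : (i : ℕ) = n + 1 := by omega
    simp only [hn', Nat.add_sub_cancel, hcn n]
    ring

lemma lagrange_decomp {K : Type*} [Field K] [DecidableEq K] {s : ℕ} (hs : 0 < s)
    (P : Polynomial K) (hM : P.Monic) (hd : P.natDegree = s) (hsep : P.Separable)
    (hsplit : P.Splits) :
    ∑ γ ∈ P.roots.toFinset, C ((P.derivative.eval γ)⁻¹) * (P /ₘ (X - C γ)) = 1 := by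
  classical
  set R := P.roots.toFinset with hR
  have hnd : P.roots.Nodup := Polynomial.nodup_roots hsep
  have hcard : R.card = s := by
    rw [hR, Multiset.toFinset_card_of_nodup hnd, ← hd,
      (Polynomial.splits_iff_card_roots).1 hsplit]
  have hroot : ∀ γ ∈ R, P.eval γ = 0 := by
    intro γ hγ
    exact (Polynomial.mem_roots (hM.ne_zero)).1 (Multiset.mem_toFinset.1 hγ)
  have hfac : ∀ γ ∈ R, (X - C γ) * (P /ₘ (X - C γ)) = P := fun γ hγ =>
    (mul_divByMonic_eq_iff_isRoot).2 (hroot γ hγ)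
  have hqself : ∀ γ ∈ R, (P /ₘ (X - C γ)).eval γ = P.derivative.eval γ := by
    intro γ hγ
    have := congrArg derivative (hfac γ hγ)
    rw [derivative_mul, derivative_sub, derivative_X, derivative_C, sub_zero, one_mul] at this
    have h2 := congrArg (eval γ) this
    simp only [eval_add, eval_mul, eval_sub, eval_X, eval_C, sub_self, zero_mul, add_zero] at h2
    exact h2
  have hder : ∀ γ ∈ R, P.derivative.eval γ ≠ 0 := by
    intro γ hγ h0
    have h1 : P.eval₂ (RingHom.id K) γ = 0 := hroot γ hγ
    have := hsep.eval₂_derivative_ne_zero (RingHom.id K) h1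
    exact this h0
  have hqother : ∀ γ ∈ R, ∀ δ ∈ R, γ ≠ δ → (P /ₘ (X - C γ)).eval δ = 0 := by
    intro γ hγ δ hδ hne
    have := congrArg (eval δ) (hfac γ hγ)
    rw [eval_mul, hroot δ hδ] at this
    have hne' : δ - γ ≠ 0 := sub_ne_zero.2 (Ne.symm hne)
    simpa [sub_eq_zero, hne'] using (mul_eq_zero.1 this).resolve_left
      (by simpa [sub_eq_zero] using fun h => hne h.symm)
  set D := (∑ γ ∈ R, C ((P.derivative.eval γ)⁻¹) * (P /ₘ (X - C γ))) - 1 with hD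
  have hdeg : D.natDegree < s := by
    have h1 : ∀ γ ∈ R, (C ((P.derivative.eval γ)⁻¹) * (P /ₘ (X - C γ))).natDegree ≤ s - 1 := by
      intro γ hγ
      refine (natDegree_C_mul_le _ _).trans ?_
      rw [natDegree_divByMonic P (monic_X_sub_C γ), hd, natDegree_X_sub_C]
    have h2 := natDegree_sum_le_of_forall_le R _ h1
    have h3 := natDegree_sub_le (∑ γ ∈ R, C ((P.derivative.eval γ)⁻¹) * (P /ₘ (X - C γ))) 1
    simp only [natDegree_one] at h3
    have h4 : D.natDegree ≤ s - 1 := h3.trans (max_le h2 (by omega))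
    omega
  have hzero : ∀ δ ∈ R, D.eval δ = 0 := by
    intro δ hδ
    rw [hD, eval_sub, eval_one, eval_finset_sum]
    rw [Finset.sum_eq_single δ]
    · simp [hqself δ hδ, hder δ hδ]
    · intro γ hγ hne
      simp [hqother γ hγ δ hδ hne]
    · intro h; exact absurd hδ h
  have : D = 0 := by
    apply Polynomial.eq_zero_of_natDegree_lt_card_of_eval_eq_zero' D R hzero
    rw [hcard]; exact hdeg
  exact sub_eq_zero.1 this

lemma pow_mulVec_eig {n : Type*} [Fintype n] [DecidableEq n] {K : Type*} [CommRing K]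
    (M : Matrix n n K) (w : n → K) (γ : K) (h : M.mulVec w = γ • w) (j : ℕ) :
    (M ^ j).mulVec w = γ ^ j • w := by
  induction j with
  | zero => simp
  | succ k ih =>
      rw [pow_succ, ← Matrix.mulVec_mulVec, h, Matrix.mulVec_smul, ih, pow_succ, smul_smul,
        mul_comm]

lemma geom_partial_le {r : ℝ} (h0 : 0 ≤ r) (h1 : r < 1) (n : ℕ) :
    ∑ j ∈ Finset.range n, r ^ j ≤ (1 - r)⁻¹ :=
  sum_le_hasSum _ (fun i _ => pow_nonneg h0 i) (hasSum_geometric_of_lt_one h0 h1)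

/-- For a Pisot number `β` of degree `s` with companion matrix `M`, there are an eigenvector
`v` with `Mv = βv` and a constant `C > 0` bounding uniformly the distance between the address
`Σ aⱼ Mʲe₁` of any greedy-type digit expansion and `(Σ aⱼ βʲ)·v`: the address map of the set of
`β`-integers is almost linear, hence `X_β` is Meyer for Pisot `β`. -/
theorem pisot_beta_integers_address_almost_linear (s : ℕ) (hs : 0 < s) (β : ℝ) (hβ : 1 < β)
    (hint : IsIntegral ℤ β) (hdeg : (minpoly ℚ β).natDegree = s)
    (hPisot : ∀ γ : ℂ, Polynomial.aeval γ (minpoly ℚ β) = 0 → γ ≠ (β : ℂ) →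
      ‖γ‖ < 1) :
    ∃ v : Fin s → ℝ, (companionMatrix s (minpoly ℚ β)).mulVec v = β • v ∧
      ∃ C > 0, ∀ N : ℕ, ∀ a : ℕ → ℤ, (∀ j ≤ N, 0 ≤ a j ∧ a j ≤ ⌊β⌋) →
        ‖(∑ j ∈ Finset.range (N + 1),
            (a j : ℝ) • ((companionMatrix s (minpoly ℚ β)) ^ j).mulVec (Pi.single ⟨0, hs⟩ 1)) -
          (∑ j ∈ Finset.range (N + 1), (a j : ℝ) * β ^ j) • v‖ ≤ C := by
  classical
  set p := minpoly ℚ β with hp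
  have hβQ : IsIntegral ℚ β := hint.tower_top
  have hmono : p.Monic := minpoly.monic hβQ
  have hirr := minpoly.irreducible hβQ
  have hsep : p.Separable := hirr.separable
  have haev : Polynomial.aeval β p = 0 := minpoly.aeval ℚ β
  set PR : Polynomial ℝ := p.map (algebraMap ℚ ℝ) with hPR
  set P : Polynomial ℂ := p.map (algebraMap ℚ ℂ) with hPdef
  have hPRm : PR.Monic := hmono.map _
  have hPm : P.Monic := hmono.map _
  have hPRdeg : PR.natDegree = s := by rw [hPR, hmono.natDegree_map, hdeg]
  have hPdeg : P.natDegree = s := by rw [hPdef, hmono.natDegree_map, hdeg]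
  have hPRβ : PR.eval β = 0 := by
    rw [hPR, Polynomial.eval_map, ← Polynomial.aeval_def, haev]
  have hPβ : P.eval (β : ℂ) = 0 := by
    rw [hPdef, Polynomial.eval_map, ← Polynomial.aeval_def]
    have h : (β : ℂ) = algebraMap ℝ ℂ β := rfl
    rw [h, Polynomial.aeval_algebraMap_apply, haev, map_zero]
  have hPmapRC : PR.map (algebraMap ℝ ℂ) = P := by
    rw [hPR, hPdef, Polynomial.map_map, ← IsScalarTower.algebraMap_eq]
  have hMeq : companionMatrix s p = cmat s PR := by
    funext i j
    simp only [companionMatrix, cmat, hPR, Polynomial.coeff_map, eq_ratCast]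
  have hMC : cmat s P = (cmat s PR).map (algebraMap ℝ ℂ) := by
    funext i j
    simp only [cmat, ← hPmapRC, Polynomial.coeff_map, Matrix.map_apply]
    split_ifs <;> simp
  have hPsep : P.Separable := hsep.map
  have hsplit : P.Splits := IsAlgClosed.splits P
  have hβR : (β:ℂ) ∈ P.roots.toFinset :=
    Multiset.mem_toFinset.2 ((Polynomial.mem_roots hPm.ne_zero).2 hPβ)
  have hsmall : ∀ γ ∈ (P.roots.toFinset).erase (β:ℂ), ‖γ‖ < 1 := by
    intro γ hγ
    obtain ⟨hne, hγR⟩ := Finset.mem_erase.1 hγ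
    apply hPisot
    · have h2 := (Polynomial.mem_roots hPm.ne_zero).1 (Multiset.mem_toFinset.1 hγR)
      rwa [Polynomial.IsRoot, hPdef, Polynomial.eval_map, ← Polynomial.aeval_def] at h2
    · exact hne
  -- eigenvector over ℝ
  set q := PR /ₘ (X - C β) with hqdef
  set v : Fin s → ℝ := (PR.derivative.eval β)⁻¹ • (fun i : Fin s => q.coeff (i:ℕ)) with hvdef
  have heig : (companionMatrix s p).mulVec v = β • v := by
    rw [hMeq, hvdef, Matrix.mulVec_smul, cmat_eig hs PR hPRm hPRdeg β hPRβ, smul_comm]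
  -- complex data
  set R := P.roots.toFinset with hRdef
  set Vc : ℂ → Fin s → ℂ := fun γ i => (P /ₘ (X - C γ)).coeff (i:ℕ) with hVcdef
  set d : ℂ → ℂ := fun γ => (P.derivative.eval γ)⁻¹ with hddef
  set T := R.erase (β:ℂ) with hTdef
  have hrootR : ∀ γ ∈ R, P.eval γ = 0 := fun γ hγ =>
    (Polynomial.mem_roots hPm.ne_zero).1 (Multiset.mem_toFinset.1 hγ)
  set e₁ : Fin s → ℂ := Pi.single (⟨0, hs⟩ : Fin s) 1 with he₁
  have hdecomp : e₁ = ∑ γ ∈ R, d γ • Vc γ := by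
    have hl := lagrange_decomp hs P hPm hPdeg hPsep hsplit
    funext i
    have hco := congrArg (fun Q : Polynomial ℂ => Q.coeff (i:ℕ)) hl
    simp only [Polynomial.finset_sum_coeff, Polynomial.coeff_C_mul, Polynomial.coeff_one] at hco
    simp only [Finset.sum_apply, Pi.smul_apply, smul_eq_mul, hVcdef, hddef, he₁, hRdef, hco,
      Pi.single_apply, Fin.ext_iff]
  have hMje : ∀ j : ℕ, ((cmat s P) ^ j).mulVec e₁ = ∑ γ ∈ R, (d γ * γ ^ j) • Vc γ := by
    intro j
    rw [hdecomp]
    have hlin : ((cmat s P) ^ j).mulVec (∑ γ ∈ R, d γ • Vc γ)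
        = ∑ γ ∈ R, d γ • ((cmat s P) ^ j).mulVec (Vc γ) := by
      simp only [← Matrix.mulVecLin_apply, map_sum, map_smul]
    rw [hlin]
    refine Finset.sum_congr rfl fun γ hγ => ?_
    rw [pow_mulVec_eig _ _ _ (cmat_eig hs P hPm hPdeg γ (hrootR γ hγ)) j, smul_smul]
  have hβfloor : (1:ℝ) ≤ ((⌊β⌋:ℤ) : ℝ) := by
    exact_mod_cast Int.le_floor.2 (by simpa using hβ.le)
  set C0 : ℝ := ∑ γ ∈ T, ‖d γ‖ * (((⌊β⌋:ℤ):ℝ) * (1 - ‖γ‖)⁻¹) * ‖Vc γ‖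
    with hC0def
  have hC0nonneg : 0 ≤ C0 := by
    refine Finset.sum_nonneg fun γ hγ => ?_
    have h1 := hsmall γ hγ
    have h2 : (0:ℝ) ≤ (1 - ‖γ‖)⁻¹ := by
      apply inv_nonneg.2; linarith
    have h3 := norm_nonneg (d γ)
    have h4 := norm_nonneg (Vc γ)
    positivity
  -- per-expansion bound
  have key : ∀ N : ℕ, ∀ a : ℕ → ℤ, (∀ j ≤ N, 0 ≤ a j ∧ a j ≤ ⌊β⌋) →
      ‖(∑ j ∈ Finset.range (N + 1), ((a j : ℝ) : ℂ) • ((cmat s P) ^ j).mulVec e₁) -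
        (∑ j ∈ Finset.range (N + 1), ((a j : ℝ) : ℂ) * (β:ℂ) ^ j) • (d (β:ℂ) • Vc (β:ℂ))‖
        ≤ C0 := by
    intro N a ha
    have hsum : (∑ j ∈ Finset.range (N + 1), ((a j : ℝ) : ℂ) • ((cmat s P) ^ j).mulVec e₁)
        = ∑ γ ∈ R, (d γ * ∑ j ∈ Finset.range (N + 1), ((a j : ℝ):ℂ) * γ ^ j) • Vc γ := by
      simp only [hMje, Finset.smul_sum]
      rw [Finset.sum_comm]
      refine Finset.sum_congr rfl fun γ _ => ?_
      rw [Finset.mul_sum, Finset.sum_smul]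
      refine Finset.sum_congr rfl fun j _ => ?_
      rw [smul_smul]
      congr 1
      ring
    have hsub : (∑ j ∈ Finset.range (N + 1), ((a j : ℝ) : ℂ) • ((cmat s P) ^ j).mulVec e₁) -
        (∑ j ∈ Finset.range (N + 1), ((a j : ℝ) : ℂ) * (β:ℂ) ^ j) • (d (β:ℂ) • Vc (β:ℂ))
        = ∑ γ ∈ T, (d γ * ∑ j ∈ Finset.range (N + 1), ((a j : ℝ):ℂ) * γ ^ j) • Vc γ := by
      rw [hsum, ← Finset.add_sum_erase R _ hβR, ← hTdef, smul_smul]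
      rw [mul_comm (∑ j ∈ Finset.range (N + 1), ((a j : ℝ):ℂ) * (β:ℂ) ^ j) (d (β:ℂ))]
      exact add_sub_cancel_left _ _
    rw [hsub]
    refine (norm_sum_le _ _).trans ?_
    rw [hC0def]
    refine Finset.sum_le_sum fun γ hγ => ?_
    rw [norm_smul, norm_mul]
    have hγ1 := hsmall γ hγ
    have hγ0 : (0:ℝ) ≤ ‖γ‖ := norm_nonneg γ
    have hA : ‖∑ j ∈ Finset.range (N+1), ((a j : ℝ) : ℂ) * γ ^ j‖
        ≤ ((⌊β⌋:ℤ):ℝ) * (1 - ‖γ‖)⁻¹ := by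
      refine (norm_sum_le _ _).trans ?_
      have step : ∀ j ∈ Finset.range (N+1), ‖((a j : ℝ) : ℂ) * γ ^ j‖
          ≤ ((⌊β⌋:ℤ):ℝ) * (‖γ‖) ^ j := by
        intro j hj
        rw [norm_mul, norm_pow, Complex.norm_real, Real.norm_eq_abs]
        have haj := ha j (Nat.lt_succ_iff.1 (Finset.mem_range.1 hj))
        apply mul_le_mul_of_nonneg_right _ (pow_nonneg hγ0 j)
        rw [abs_of_nonneg (by exact_mod_cast haj.1 : (0:ℝ) ≤ (a j : ℝ))]
        exact_mod_cast haj.2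
      refine (Finset.sum_le_sum step).trans ?_
      rw [← Finset.mul_sum]
      have := geom_partial_le hγ0 hγ1 (N+1)
      have h2 : (0:ℝ) ≤ ((⌊β⌋:ℤ):ℝ) := by linarith
      exact mul_le_mul_of_nonneg_left this h2
    apply mul_le_mul_of_nonneg_right _ (norm_nonneg _)
    exact mul_le_mul_of_nonneg_left hA (norm_nonneg _)
  -- transfer to ℝ
  have hpow : ∀ j : ℕ, (companionMatrix s p ^ j).map (algebraMap ℝ ℂ) = (cmat s P) ^ j := by
    intro j
    rw [← RingHom.mapMatrix_apply, map_pow, RingHom.mapMatrix_apply, hMeq, ← hMC]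
  have hsingle : (algebraMap ℝ ℂ) ∘ (Pi.single (⟨0,hs⟩:Fin s) (1:ℝ)) = e₁ := by
    funext k
    simp only [he₁, Function.comp_apply, Pi.single_apply, apply_ite (algebraMap ℝ ℂ),
      map_one, map_zero]
  have hmv : ∀ (j : ℕ) (i : Fin s),
      ((((companionMatrix s p ^ j).mulVec (Pi.single (⟨0,hs⟩:Fin s) (1:ℝ))) i : ℝ) : ℂ)
        = ((cmat s P) ^ j).mulVec e₁ i := by
    intro j i
    have h1 := RingHom.map_mulVec (algebraMap ℝ ℂ) (companionMatrix s p ^ j)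
      (Pi.single (⟨0,hs⟩:Fin s) (1:ℝ)) i
    rw [hpow, hsingle] at h1
    rw [← h1, Complex.coe_algebraMap]
  have hvC : ∀ i : Fin s, ((v i : ℝ) : ℂ) = d (β:ℂ) * Vc (β:ℂ) i := by
    intro i
    have hder2 : P.derivative.eval (β:ℂ) = ((PR.derivative.eval β : ℝ) : ℂ) := by
      rw [← hPmapRC, derivative_map, Polynomial.eval_map]
      rw [show ((β:ℝ):ℂ) = algebraMap ℝ ℂ β from rfl, Polynomial.eval₂_at_apply,
        Complex.coe_algebraMap]
    have hq2 : (P /ₘ (X - C (β:ℂ))) = q.map (algebraMap ℝ ℂ) := by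
      rw [hqdef, Polynomial.map_divByMonic (algebraMap ℝ ℂ) (monic_X_sub_C β), hPmapRC]
      congr 1
      simp only [Polynomial.map_sub, Polynomial.map_X, Polynomial.map_C, Complex.coe_algebraMap]
    rw [hvdef]
    simp only [Pi.smul_apply, smul_eq_mul]
    rw [hddef]
    simp only [hVcdef]
    rw [hder2, hq2, Polynomial.coeff_map, Complex.coe_algebraMap]
    push_cast
    ring
  refine ⟨v, heig, C0 + 1, by linarith, ?_⟩
  intro N a ha
  have hnorm := key N a ha
  refine (pi_norm_le_iff_of_nonneg (by linarith)).2 fun i => ?_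
  have hcoord :
      ((((∑ j ∈ Finset.range (N + 1),
          (a j : ℝ) • ((companionMatrix s p) ^ j).mulVec (Pi.single ⟨0, hs⟩ 1)) -
        (∑ j ∈ Finset.range (N + 1), (a j : ℝ) * β ^ j) • v) i : ℝ) : ℂ)
      = ((∑ j ∈ Finset.range (N + 1), ((a j : ℝ) : ℂ) • ((cmat s P) ^ j).mulVec e₁) -
        (∑ j ∈ Finset.range (N + 1), ((a j : ℝ) : ℂ) * (β:ℂ) ^ j) • (d (β:ℂ) • Vc (β:ℂ))) i := by
    simp only [Pi.sub_apply, Finset.sum_apply, Pi.smul_apply, smul_eq_mul]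
    push_cast
    simp only [hmv, hvC]
  have h2 : ‖((∑ j ∈ Finset.range (N + 1),
          (a j : ℝ) • ((companionMatrix s p) ^ j).mulVec (Pi.single ⟨0, hs⟩ 1)) -
        (∑ j ∈ Finset.range (N + 1), (a j : ℝ) * β ^ j) • v) i‖
      = ‖((∑ j ∈ Finset.range (N + 1), ((a j : ℝ) : ℂ) • ((cmat s P) ^ j).mulVec e₁) -
        (∑ j ∈ Finset.range (N + 1), ((a j : ℝ) : ℂ) * (β:ℂ) ^ j) • (d (β:ℂ) • Vc (β:ℂ))) i‖ := by
    rw [← hcoord, Complex.norm_real]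
  rw [h2]
  exact (norm_le_pi_norm _ i).trans (hnorm.trans (by linarith))
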